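/- The only solution in positive integers to y² = x³ + 1 is (x, y) = (2, 3). -/

import Mathlib

/-- Eisenstein integers `a + b ω` where `ω = (-1+√-3)/2`, `ω² + ω + 1 = 0`. -/
@[ext]
structure Eis where
  a : ℤ
  b : ℤ
deriving DecidableEq

namespace Eis

instance : Zero Eis := ⟨⟨0, 0⟩⟩
instance : One Eis := ⟨⟨1, 0⟩⟩
instance : Add Eis := ⟨fun x y => ⟨x.a + y.a, x.b + y.b⟩⟩
instance : Neg Eis := ⟨fun x => ⟨-x.a, -x.b⟩⟩
instance : Mul Eis := ⟨fun x y => ⟨x.a * y.a - x.b * y.b, x.a * y.b + x.b * y.a - x.b * y.b⟩⟩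

@[simp] theorem zero_a : (0 : Eis).a = 0 := rfl
@[simp] theorem zero_b : (0 : Eis).b = 0 := rfl
@[simp] theorem one_a : (1 : Eis).a = 1 := rfl
@[simp] theorem one_b : (1 : Eis).b = 0 := rfl
@[simp] theorem add_a (x y : Eis) : (x + y).a = x.a + y.a := rfl
@[simp] theorem add_b (x y : Eis) : (x + y).b = x.b + y.b := rfl
@[simp] theorem neg_a (x : Eis) : (-x).a = -x.a := rfl
@[simp] theorem neg_b (x : Eis) : (-x).b = -x.b := rfl
@[simp] theorem mul_a (x y : Eis) : (x * y).a = x.a * y.a - x.b * y.b := rfl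
@[simp] theorem mul_b (x y : Eis) : (x * y).b = x.a * y.b + x.b * y.a - x.b * y.b := rfl

instance commRing : CommRing Eis where
  add_assoc x y z := by ext <;> simp <;> ring
  zero_add x := by ext <;> simp
  add_zero x := by ext <;> simp
  add_comm x y := by ext <;> simp <;> ring
  neg_add_cancel x := by ext <;> simp
  left_distrib x y z := by ext <;> simp <;> ring
  right_distrib x y z := by ext <;> simp <;> ring
  zero_mul x := by ext <;> simp
  mul_zero x := by ext <;> simp
  mul_assoc x y z := by ext <;> simp <;> ring
  one_mul x := by ext <;> simp
  mul_one x := by ext <;> simp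
  mul_comm x y := by ext <;> simp <;> ring
  nsmul := fun n x => ⟨n * x.a, n * x.b⟩
  nsmul_zero := fun x => by ext <;> show ((0:ℕ):ℤ) * _ = 0 <;> simp
  nsmul_succ := fun n x => by ext <;> show ((n+1:ℕ):ℤ) * _ = ((n:ℕ):ℤ) * _ + _ <;> push_cast <;> ring
  zsmul := fun n x => ⟨n * x.a, n * x.b⟩
  zsmul_zero' := fun x => by ext <;> show (0:ℤ) * _ = 0 <;> simp
  zsmul_succ' := fun n x => by ext <;> show ((n.succ:ℕ):ℤ) * _ = ((n:ℕ):ℤ) * _ + _ <;> push_cast <;> ring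
  zsmul_neg' := fun n x => by
    ext <;> show (Int.negSucc n) * _ = -(((n.succ:ℕ):ℤ) * _) <;> simp [Int.negSucc_eq] <;> ring

instance : Nontrivial Eis := ⟨⟨0, 1, fun h => by simpa using congrArg Eis.a h⟩⟩

@[simp] theorem sub_a (x y : Eis) : (x - y).a = x.a - y.a := rfl
@[simp] theorem sub_b (x y : Eis) : (x - y).b = x.b - y.b := rfl

/-- norm -/
def nrm (x : Eis) : ℤ := x.a ^ 2 - x.a * x.b + x.b ^ 2

@[simp] theorem nrm_mk (x y : ℤ) : nrm ⟨x, y⟩ = x ^ 2 - x * y + y ^ 2 := rfl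

theorem nrm_mul (x y : Eis) : nrm (x * y) = nrm x * nrm y := by
  simp only [nrm, mul_a, mul_b]; ring

theorem nrm_nonneg (x : Eis) : 0 ≤ nrm x := by
  have := sq_nonneg (2 * x.a - x.b); have := sq_nonneg x.b; simp only [nrm]; nlinarith

theorem nrm_eq_zero_iff {x : Eis} : nrm x = 0 ↔ x = 0 := by
  constructor
  · intro h
    have h4 : (2 * x.a - x.b) ^ 2 + 3 * x.b ^ 2 = 0 := by simp only [nrm] at h; nlinarith
    have hb : x.b = 0 := by nlinarith [sq_nonneg (2 * x.a - x.b), sq_nonneg x.b]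
    have ha : x.a = 0 := by rw [hb] at h4; nlinarith
    ext <;> simp [ha, hb]
  · rintro rfl; simp [nrm]

/-- conjugation -/
def conj (x : Eis) : Eis := ⟨x.a - x.b, -x.b⟩

@[simp] theorem conj_a (x : Eis) : (conj x).a = x.a - x.b := rfl
@[simp] theorem conj_b (x : Eis) : (conj x).b = -x.b := rfl

theorem conj_mul (x y : Eis) : conj (x * y) = conj x * conj y := by
  ext <;> simp <;> ring

theorem mul_conj (x : Eis) : x * conj x = ⟨nrm x, 0⟩ := by
  ext <;> simp [nrm] <;> ring

theorem dvd_conj_of_dvd {x y : Eis} (h : x ∣ y) : conj x ∣ conj y := by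
  obtain ⟨c, rfl⟩ := h; exact ⟨conj c, conj_mul _ _⟩

theorem nrm_dvd_nrm {x y : Eis} (h : x ∣ y) : nrm x ∣ nrm y := by
  obtain ⟨c, rfl⟩ := h; exact ⟨nrm c, nrm_mul _ _⟩

end Eis

namespace Eis

theorem isUnit_iff_nrm_eq_one {x : Eis} : IsUnit x ↔ nrm x = 1 := by
  constructor
  · rintro ⟨u, rfl⟩
    have h : nrm (u : Eis) * nrm ((u⁻¹ : Eisˣ) : Eis) = 1 := by
      rw [← nrm_mul]; simp [nrm]
    have h1 := nrm_nonneg (u : Eis)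
    have := Int.eq_one_of_mul_eq_one_right h1 h
    exact this
  · intro h
    exact IsUnit.of_mul_eq_one (conj x) (by rw [mul_conj, h]; rfl)

/-- classification of units by coordinates -/
theorem unit_cases {x : Eis} (h : IsUnit x) :
    (x.a = 1 ∧ x.b = 0) ∨ (x.a = -1 ∧ x.b = 0) ∨ (x.a = 0 ∧ x.b = 1) ∨
    (x.a = 0 ∧ x.b = -1) ∨ (x.a = 1 ∧ x.b = 1) ∨ (x.a = -1 ∧ x.b = -1) := by
  have h1 : nrm x = 1 := isUnit_iff_nrm_eq_one.mp h
  have h4 : (2 * x.a - x.b) ^ 2 + 3 * x.b ^ 2 = 4 := by simp only [nrm] at h1; nlinarith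
  have hb : x.b = -1 ∨ x.b = 0 ∨ x.b = 1 := by
    have : x.b ^ 2 ≤ 1 := by nlinarith [sq_nonneg (2 * x.a - x.b)]
    have h5 : -1 ≤ x.b := by nlinarith
    have h6 : x.b ≤ 1 := by nlinarith
    omega
  rcases hb with hb | hb | hb <;> rw [hb] at h4
  · have h7 : (2 * x.a + 1 - 1) * (2 * x.a + 1 + 1) = 0 := by nlinarith
    have : x.a = 0 ∨ x.a = -1 := by rcases mul_eq_zero.mp h7 with h | h <;> omega
    rcases this with h | h
    · exact Or.inr (Or.inr (Or.inr (Or.inl ⟨h, hb⟩)))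
    · exact Or.inr (Or.inr (Or.inr (Or.inr (Or.inr ⟨h, hb⟩))))
  · have h7 : (x.a - 1) * (x.a + 1) = 0 := by nlinarith
    have : x.a = 1 ∨ x.a = -1 := by rcases mul_eq_zero.mp h7 with h | h <;> omega
    rcases this with h | h
    · exact Or.inl ⟨h, hb⟩
    · exact Or.inr (Or.inl ⟨h, hb⟩)
  · have h7 : (2 * x.a - 1 - 1) * (2 * x.a - 1 + 1) = 0 := by nlinarith
    have : x.a = 0 ∨ x.a = 1 := by rcases mul_eq_zero.mp h7 with h | h <;> omega
    rcases this with h | h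
    · exact Or.inr (Or.inr (Or.inl ⟨h, hb⟩))
    · exact Or.inr (Or.inr (Or.inr (Or.inr (Or.inl ⟨h, hb⟩))))

/-! ### Euclidean division -/

/-- nearest-integer division of m by n -/
def rdiv (m n : ℤ) : ℤ := (2 * m + n) / (2 * n)

theorem rdiv_close {m n : ℤ} (hn : 0 < n) : |2 * (m - n * rdiv m n)| ≤ n := by
  have h2n : (0:ℤ) < 2 * n := by omega
  have h1 := Int.mul_ediv_add_emod (2 * m + n) (2 * n)
  have h2 := Int.emod_nonneg (2 * m + n) (by omega : (2*n:ℤ) ≠ 0)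
  have h3 := Int.emod_lt_of_pos (2 * m + n) h2n
  rw [abs_le]
  unfold rdiv
  constructor <;> nlinarith [Int.emod_nonneg (2*m+n) (show (2*n:ℤ) ≠ 0 by omega)]

instance : Div Eis :=
  ⟨fun x y => ⟨rdiv (x * conj y).a (nrm y), rdiv (x * conj y).b (nrm y)⟩⟩

instance : Mod Eis := ⟨fun x y => x - y * (x / y)⟩

theorem div_def (x y : Eis) :
    x / y = ⟨rdiv (x * conj y).a (nrm y), rdiv (x * conj y).b (nrm y)⟩ := rfl

theorem mod_def (x y : Eis) : x % y = x - y * (x / y) := rfl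

theorem nrm_mod_lt (x : Eis) {y : Eis} (hy : y ≠ 0) : nrm (x % y) < nrm y := by
  have hn : 0 < nrm y := lt_of_le_of_ne (nrm_nonneg y) (fun h => hy (nrm_eq_zero_iff.mp h.symm))
  set n := nrm y with hndef
  set q := x / y with hq
  set e1 := (x * conj y).a - n * q.a with he1
  set e2 := (x * conj y).b - n * q.b with he2
  have hc1 : |2 * e1| ≤ n := by rw [he1, hq, div_def]; exact rdiv_close hn
  have hc2 : |2 * e2| ≤ n := by rw [he2, hq, div_def]; exact rdiv_close hn
  -- (x % y) * conj y = ⟨e1, e2⟩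
  have key : (x % y) * conj y = ⟨e1, e2⟩ := by
    rw [mod_def, sub_mul, mul_comm y q, mul_assoc, mul_conj]
    ext <;> simp [he1, he2] <;> ring
  have hnrm : nrm (x % y) * n = e1 ^ 2 - e1 * e2 + e2 ^ 2 := by
    have := nrm_mul (x % y) (conj y)
    rw [key] at this
    have hcn : nrm (conj y) = n := by simp [nrm, hndef]; ring
    rw [hcn] at this
    rw [← this]; simp [nrm]
  have habs1 : (2 * e1) ^ 2 ≤ n ^ 2 := by
    have := abs_le.mp hc1; nlinarith [this.1, this.2]
  have habs2 : (2 * e2) ^ 2 ≤ n ^ 2 := by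
    have := abs_le.mp hc2; nlinarith [this.1, this.2]
  have hineq : 4 * (e1 ^ 2 - e1 * e2 + e2 ^ 2) ≤ 3 * n ^ 2 := by
    nlinarith [sq_nonneg (e1 + e2), sq_nonneg (e1 - e2)]
  nlinarith [nrm_nonneg (x % y)]

theorem nrm_natAbs_mod_lt (x : Eis) {y : Eis} (hy : y ≠ 0) :
    (nrm (x % y)).natAbs < (nrm y).natAbs := by
  have h := nrm_mod_lt x hy
  have h1 := nrm_nonneg (x % y)
  have h2 := nrm_nonneg y
  omega

instance : EuclideanDomain Eis :=
  { Eis.commRing, (inferInstance : Nontrivial Eis) with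
    quotient := (· / ·)
    remainder := (· % ·)
    quotient_zero := fun x => by
      have : nrm (0 : Eis) = 0 := by simp [nrm]
      ext <;> simp [div_def, rdiv, mul_conj, this]
    quotient_mul_add_remainder_eq := fun x y => by
      change y * (x / y) + (x - y * (x / y)) = x; ring
    r := fun x y => (nrm x).natAbs < (nrm y).natAbs
    r_wellFounded := (measure fun x : Eis => (nrm x).natAbs).wf
    remainder_lt := fun x y hy => nrm_natAbs_mod_lt x hy
    mul_left_not_lt := fun x y hy => by
      simp only [not_lt]
      rw [nrm_mul, Int.natAbs_mul]
      have h1 : 1 ≤ (nrm y).natAbs := by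
        have := nrm_nonneg y
        rcases Nat.eq_zero_or_pos (nrm y).natAbs with h | h
        · exfalso; exact hy (nrm_eq_zero_iff.mp (by omega))
        · omega
      exact Nat.le_mul_of_pos_right _ (by omega) }

noncomputable instance : GCDMonoid Eis :=
  UniqueFactorizationMonoid.toGCDMonoid Eis

end Eis

namespace Eis

theorem cube_coords (a b : ℤ) :
    (⟨a, b⟩ : Eis) ^ 3 = ⟨a^3 - 3*a*b^2 + b^3, 3*a^2*b - 3*a*b^2⟩ := by
  have : (⟨a, b⟩ : Eis) ^ 3 = ⟨a,b⟩ * ⟨a,b⟩ * ⟨a,b⟩ := by ring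
  rw [this]
  ext <;> simp <;> ring

theorem cube_b_even (z : Eis) : Even ((z ^ 3).b) := by
  obtain ⟨a, b⟩ := z
  rw [cube_coords]
  have heq : 3*a^2*b - 3*a*b^2 = 3*a*b*(a-b) := by ring
  rw [heq]
  rcases Int.even_or_odd a with ha | ha
  · exact ((ha.mul_left 3).mul_right b).mul_right _
  · rcases Int.even_or_odd b with hb | hb
    · exact (hb.mul_left (3*a)).mul_right _
    · exact (Odd.sub_odd ha hb).mul_left _

/-- ω * z has coordinates ⟨-z.b, z.a - z.b⟩ and (ω*z)^3 = z^3 -/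
theorem omega_mul_cube (z : Eis) : (⟨-z.b, z.a - z.b⟩ : Eis) ^ 3 = z ^ 3 := by
  obtain ⟨a, b⟩ := z
  rw [cube_coords, cube_coords]
  ext <;> simp <;> ring

/-- every cube is the cube of an element with even b-coordinate -/
theorem exists_cube_rep (z : Eis) : ∃ a b : ℤ, Even b ∧ (⟨a, b⟩ : Eis) ^ 3 = z ^ 3 := by
  obtain ⟨a, b⟩ := z
  rcases Int.even_or_odd b with hb | hb
  · exact ⟨a, b, hb, rfl⟩
  · rcases Int.even_or_odd a with ha | ha
    · -- use ω² * z = ⟨b - a, -a⟩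
      refine ⟨b - a, -a, ha.neg, ?_⟩
      rw [cube_coords, cube_coords]
      ext <;> simp <;> ring
    · -- both odd: use ω * z = ⟨-b, a - b⟩
      exact ⟨-b, a - b, Odd.sub_odd ha hb, omega_mul_cube ⟨a, b⟩⟩

end Eis

theorem int_cube_inj {S T : ℤ} (h : S ^ 3 = T ^ 3) : S = T :=
  ((Odd.strictMono_pow (R := ℤ) ⟨1, by norm_num⟩).injective h)

theorem isCoprime_of_odd {g : ℤ} (hg : Odd g) : IsCoprime g 2 := by
  obtain ⟨t, ht⟩ := hg
  exact ⟨1, -t, by omega⟩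

theorem isCoprime_of_not_three_dvd {g : ℤ} (hg : ¬ (3 ∣ g)) : IsCoprime g 3 := by
  have h1 : g % 3 = 1 ∨ g % 3 = 2 := by omega
  rcases h1 with h1 | h1
  · exact ⟨1, -(g / 3), by omega⟩
  · exact ⟨2, -(2 * (g / 3) + 1), by omega⟩

/-- Euler's lemma: if `p² + 3q²` is a cube and `gcd(p,q)=1` then `p,q` come from
the cube of `u + v√-3`. -/
theorem euler_cube {p q S : ℤ} (hco : IsCoprime p q) (h : p ^ 2 + 3 * q ^ 2 = S ^ 3) :
    ∃ u v : ℤ, p = u ^ 3 - 9 * u * v ^ 2 ∧ q = 3 * u ^ 2 * v - 3 * v ^ 3 ∧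
      S = u ^ 2 + 3 * v ^ 2 := by
  obtain ⟨A0, B0, hAB0⟩ := hco
  -- p and q have opposite parity
  have hpar : (Even p ∧ Odd q) ∨ (Odd p ∧ Even q) := by
    rcases Int.even_or_odd p with hp | hp <;> rcases Int.even_or_odd q with hq | hq
    · exfalso; obtain ⟨k, hk⟩ := hp; obtain ⟨l, hl⟩ := hq
      have h2 : (2:ℤ) ∣ 1 := ⟨A0 * k + B0 * l, by rw [hk, hl] at hAB0; linear_combination -hAB0⟩
      norm_num at h2
    · exact Or.inl ⟨hp, hq⟩
    · exact Or.inr ⟨hp, hq⟩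
    · -- both odd: S³ ≡ 4 mod 8, impossible
      exfalso
      obtain ⟨k, hk⟩ := hp; obtain ⟨l, hl⟩ := hq
      subst hk; subst hl
      have key : S ^ 3 = 4 * (k*(k+1) + 3*(l*(l+1)) + 1) := by linarith [h]
      have hodd : Odd (k*(k+1) + 3*(l*(l+1)) + 1) :=
        Even.add_one ((Int.even_mul_succ_self k).add ((Int.even_mul_succ_self l).mul_left 3))
      rcases Int.even_or_odd S with hS | hS
      · obtain ⟨s, hs⟩ := hS
        have h8 : S ^ 3 = 8 * s ^ 3 := by rw [hs]; ring
        obtain ⟨m, hm⟩ := hodd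
        omega
      · obtain ⟨m, hm⟩ := hS.pow (n := 3)
        obtain ⟨m', hm'⟩ := hodd
        omega
  have hpq_odd : Odd (p + q) := by
    rcases hpar with ⟨hp, hq⟩ | ⟨hp, hq⟩
    · exact hp.add_odd hq
    · exact hp.add_even hq
  -- S is odd
  have hS3_odd : Odd (S ^ 3) := by
    rw [← h]
    rcases hpar with ⟨hp, hq⟩ | ⟨hp, hq⟩
    · exact (Int.even_pow.mpr ⟨hp, by norm_num⟩).add_odd
        (Odd.mul (⟨1, by norm_num⟩ : Odd (3:ℤ)) (hq.pow))
    · exact (hp.pow).add_even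
        ((Int.even_pow.mpr ⟨hq, by norm_num⟩).mul_left 3)
  have hS_odd : Odd S := by
    rcases Int.even_or_odd S with hS | hS
    · exfalso; obtain ⟨s, hs⟩ := hS
      have : Even (S ^ 3) := Int.even_pow.mpr ⟨⟨s, hs⟩, by norm_num⟩
      exact (Int.not_odd_iff_even.mpr this) hS3_odd
    · exact hS
  -- 3 does not divide S
  have h3S : ¬ (3 ∣ S) := by
    rintro ⟨t, ht⟩
    rw [ht] at h
    have hp3 : (3:ℤ) ∣ p := by
      have : (3:ℤ) ∣ p ^ 2 := ⟨9 * t ^ 3 - q ^ 2, by linear_combination h⟩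
      exact Int.Prime.dvd_pow' (by norm_num) this
    obtain ⟨P, hP⟩ := hp3
    rw [hP] at h
    have hq3 : (3:ℤ) ∣ q := by
      have : (3:ℤ) ∣ q ^ 2 := ⟨3 * t ^ 3 - P ^ 2, by linarith [h]⟩
      exact Int.Prime.dvd_pow' (by norm_num) this
    obtain ⟨Q, hQ⟩ := hq3
    rw [hP, hQ] at hAB0
    have h31 : (3:ℤ) ∣ 1 := ⟨A0 * P + B0 * Q, by linear_combination -hAB0⟩
    norm_num at h31
  -- the Eisenstein element α = p + q√-3 = (p+q) + 2q ω
  set α : Eis := ⟨p + q, 2 * q⟩ with hα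
  have hconjα : Eis.conj α = ⟨p - q, -(2*q)⟩ := by
    ext <;> simp [hα, Eis.conj] <;> ring
  have hnrmα : Eis.nrm α = S ^ 3 := by
    simp only [Eis.nrm, hα]; linarith [h]
  have hprod : α * Eis.conj α = (⟨S, 0⟩ : Eis) ^ 3 := by
    rw [Eis.mul_conj, hnrmα, Eis.cube_coords]
    ext <;> simp
  -- gcd is a unit
  have hunit : IsUnit (gcd α (Eis.conj α)) := by
    set δ := gcd α (Eis.conj α) with hδ
    have hd1 : δ ∣ α := gcd_dvd_left _ _
    have hd2 : δ ∣ Eis.conj α := gcd_dvd_right _ _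
    set g := Eis.nrm δ with hg
    have hgS : g ∣ S ^ 3 := hnrmα ▸ Eis.nrm_dvd_nrm hd1
    have hg_odd : Odd g := by
      rcases Int.even_or_odd g with hge | hgo
      · exfalso
        obtain ⟨c, hc⟩ := hgS
        obtain ⟨k, hk⟩ := hge
        have heven : Even (S ^ 3) := ⟨k * c, by rw [hc, hk]; ring⟩
        exact (Int.not_odd_iff_even.mpr heven) hS3_odd
      · exact hgo
    have hg3 : ¬ (3:ℤ) ∣ g := by
      rintro h3g
      have : (3:ℤ) ∣ S ^ 3 := h3g.trans hgS
      exact h3S (Int.Prime.dvd_pow' (by norm_num) this)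
    -- g ∣ 4p²
    have hsum : α + Eis.conj α = ⟨2 * p, 0⟩ := by rw [hconjα]; ext <;> simp [hα] <;> ring
    have hdiff : α - Eis.conj α = ⟨2 * q, 4 * q⟩ := by rw [hconjα]; ext <;> simp [hα] <;> ring
    have hg4p : g ∣ 4 * p ^ 2 := by
      have hdvd : δ ∣ (⟨2 * p, 0⟩ : Eis) := hsum ▸ dvd_add hd1 hd2
      have := Eis.nrm_dvd_nrm hdvd
      simpa [Eis.nrm] using (by
        have hn : Eis.nrm ⟨2 * p, 0⟩ = 4 * p ^ 2 := by simp [Eis.nrm]; ring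
        rwa [hn] at this)
    have hg12q : g ∣ 12 * q ^ 2 := by
      have hdvd : δ ∣ (⟨2 * q, 4 * q⟩ : Eis) := hdiff ▸ dvd_sub hd1 hd2
      have := Eis.nrm_dvd_nrm hdvd
      have hn : Eis.nrm ⟨2 * q, 4 * q⟩ = 12 * q ^ 2 := by simp [Eis.nrm]; ring
      rwa [hn] at this
    have hco2 : IsCoprime g 2 := isCoprime_of_odd hg_odd
    have hco4 : IsCoprime g 4 := by
      have := hco2.mul_right hco2
      norm_num at this
      exact this
    have hco3 : IsCoprime g 3 := isCoprime_of_not_three_dvd hg3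
    have hgp2 : g ∣ p ^ 2 := hco4.dvd_of_dvd_mul_left (by rwa [mul_comm] at hg4p ⊢)
    have hgq2 : g ∣ q ^ 2 := by
      have h34 : (12 : ℤ) = 4 * 3 := by norm_num
      have : g ∣ 4 * (3 * q ^ 2) := by rw [show (4:ℤ) * (3 * q^2) = 12 * q^2 by ring]; exact hg12q
      have h3q : g ∣ 3 * q ^ 2 := hco4.dvd_of_dvd_mul_left this
      exact hco3.dvd_of_dvd_mul_left h3q
    have hg1 : g ∣ 1 := by
      have hcpq : IsCoprime (p ^ 2) (q ^ 2) := IsCoprime.pow ⟨A0, B0, hAB0⟩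
      obtain ⟨A, B, hAB⟩ := hcpq
      have : g ∣ A * p ^ 2 + B * q ^ 2 := dvd_add (Dvd.dvd.mul_left hgp2 A) (Dvd.dvd.mul_left hgq2 B)
      rwa [hAB] at this
    have : g = 1 := Int.eq_one_of_dvd_one (Eis.nrm_nonneg δ) hg1
    exact Eis.isUnit_iff_nrm_eq_one.mpr this
  -- factor α as a cube times a unit
  obtain ⟨γ, hγ⟩ := exists_associated_pow_of_mul_eq_pow hunit hprod
  obtain ⟨ε, hε⟩ := hγ
  -- α = γ³ * ε with ε a unit; use parity to show α is a cube
  have hαa_odd : Odd (α.a) := hpq_odd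
  have hαb_even : Even (α.b) := ⟨q, by simp [hα]; ring⟩
  have hcube : ∃ δ' : Eis, δ' ^ 3 = α := by
    have hd_even := Eis.cube_b_even γ
    rcases Eis.unit_cases ε.isUnit with ⟨h1, h2⟩ | ⟨h1, h2⟩ | ⟨h1, h2⟩ | ⟨h1, h2⟩ | ⟨h1, h2⟩ | ⟨h1, h2⟩
    · refine ⟨γ, ?_⟩
      have hε1 : (ε : Eis) = 1 := by ext <;> simp [h1, h2]
      rw [← hε, hε1, mul_one]
    · refine ⟨-γ, ?_⟩
      have hε1 : (ε : Eis) = -1 := by ext <;> simp [h1, h2]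
      rw [← hε, hε1]; ring
    · exfalso
      -- α.a = -(γ³).b even, contradiction
      have : α.a = -((γ ^ 3).b) := by
        rw [← hε]; simp [h1, h2]
      rw [this] at hαa_odd
      obtain ⟨k, hk⟩ := hd_even; obtain ⟨m, hm⟩ := hαa_odd; omega
    · exfalso
      have : α.a = (γ ^ 3).b := by
        rw [← hε]; simp [h1, h2]
      rw [this] at hαa_odd
      obtain ⟨k, hk⟩ := hd_even; obtain ⟨m, hm⟩ := hαa_odd; omega
    · exfalso
      -- ε = 1 + ω : α = ⟨c - d, c⟩; c odd from α.a odd & d even, but α.b = c even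
      have ha' : α.a = (γ ^ 3).a - (γ ^ 3).b := by rw [← hε]; simp [h1, h2] <;> ring_nf
      have hb' : α.b = (γ ^ 3).a := by rw [← hε]; simp [h1, h2] <;> ring_nf
      obtain ⟨k, hk⟩ := hd_even; obtain ⟨m, hm⟩ := hαa_odd
      obtain ⟨l, hl⟩ := hαb_even
      omega
    · exfalso
      have ha' : α.a = (γ ^ 3).b - (γ ^ 3).a := by rw [← hε]; simp [h1, h2] <;> ring_nf
      have hb' : α.b = -(γ ^ 3).a := by rw [← hε]; simp [h1, h2] <;> ring_nf
      obtain ⟨k, hk⟩ := hd_even; obtain ⟨m, hm⟩ := hαa_odd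
      obtain ⟨l, hl⟩ := hαb_even
      omega
  obtain ⟨δ', hδ'⟩ := hcube
  obtain ⟨a, b, hb_even, hab⟩ := Eis.exists_cube_rep δ'
  rw [hδ'] at hab
  -- now ⟨a,b⟩³ = α with b even
  obtain ⟨v, hv⟩ := hb_even
  have hb2 : b = 2 * v := by omega
  subst hb2
  rw [Eis.cube_coords] at hab
  have hEa : p + q = a ^ 3 - 3 * a * (2*v) ^ 2 + (2*v) ^ 3 := by
    have := congrArg Eis.a hab
    simpa [hα] using this.symm
  have hEb : 2 * q = 3 * a ^ 2 * (2*v) - 3 * a * (2*v) ^ 2 := by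
    have := congrArg Eis.b hab
    simpa [hα] using this.symm
  refine ⟨a - v, v, ?_, ?_, ?_⟩
  · -- p = u³ - 9uv²
    have hq' : q = 3 * (a - v) ^ 2 * v - 3 * v ^ 3 := by
      have h2 : 2 * q = 2 * (3 * (a - v) ^ 2 * v - 3 * v ^ 3) := by linear_combination hEb
      omega
    linear_combination hEa - hq'
  · have h2 : 2 * q = 2 * (3 * (a - v) ^ 2 * v - 3 * v ^ 3) := by linear_combination hEb
    omega
  · -- S = u² + 3v²
    have hnδ : Eis.nrm ⟨a, 2*v⟩ = (a - v) ^ 2 + 3 * v ^ 2 := by simp [Eis.nrm]; ring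
    have hcube3 : Eis.nrm α = (Eis.nrm ⟨a, 2*v⟩) ^ 3 := by
      rw [← hab, Eis.nrm_mk, Eis.nrm_mk]
      ring
    rw [hnrmα, hnδ] at hcube3
    exact int_cube_inj hcube3

theorem int_cube_split {a b c : ℤ} (hco : IsCoprime a b) (h : a * b = c ^ 3) :
    ∃ A : ℤ, a = A ^ 3 := by
  have hg : IsUnit (gcd a b) := hco.isUnit_of_dvd' (gcd_dvd_left a b) (gcd_dvd_right a b)
  obtain ⟨d, hd⟩ := exists_associated_pow_of_mul_eq_pow hg h
  rcases Int.associated_iff.mp hd with h' | h'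
  · exact ⟨d, h'.symm⟩
  · exact ⟨-d, by rw [← neg_eq_iff_eq_neg.mpr h']; ring⟩

theorem one_le_sq {a : ℤ} (ha : a ≠ 0) : 1 ≤ a ^ 2 := by
  have h1 : 1 ≤ |a| := Int.one_le_abs ha
  nlinarith [sq_abs a, abs_nonneg a]

theorem odd_of_cube_odd {S : ℤ} (h : Odd (S ^ 3)) : Odd S := by
  rcases Int.even_or_odd S with hS | hS
  · exact absurd (Int.even_pow.mpr ⟨hS, by norm_num⟩) (Int.not_even_iff_odd.mpr h)
  · exact hS

theorem odd_sq_form {A B : ℤ} (h : Odd (A + B)) : Odd (A ^ 2 + 3 * B ^ 2) := by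
  rcases Int.even_or_odd A with hA | hA
  · obtain ⟨k, hk⟩ := hA
    have hB : Odd B := by
      rcases Int.even_or_odd B with hB | hB
      · exfalso; obtain ⟨l, hl⟩ := hB; obtain ⟨m, hm⟩ := h; omega
      · exact hB
    obtain ⟨l, hl⟩ := hB
    exact ⟨2*k^2 + 6*l^2 + 6*l + 1, by rw [hk, hl]; ring⟩
  · obtain ⟨k, hk⟩ := hA
    have hB : Even B := by
      rcases Int.even_or_odd B with hB | hB
      · exact hB
      · exfalso; obtain ⟨l, hl⟩ := hB; obtain ⟨m, hm⟩ := h; omega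
    obtain ⟨l, hl⟩ := hB
    exact ⟨2*k^2 + 2*k + 6*l^2, by rw [hk, hl]; ring⟩

theorem odd_add_of_odd_form {u v : ℤ} (h : Odd (u ^ 2 + 3 * v ^ 2)) : Odd (u + v) := by
  rcases Int.even_or_odd u with hu | hu <;> rcases Int.even_or_odd v with hv | hv
  · exfalso
    obtain ⟨k, hk⟩ := hu; obtain ⟨l, hl⟩ := hv; obtain ⟨m, hm⟩ := h
    have : u ^ 2 + 3 * v ^ 2 = 2*(2*k^2+6*l^2) := by rw [hk, hl]; ring
    omega
  · obtain ⟨k, hk⟩ := hu; obtain ⟨l, hl⟩ := hv; exact ⟨k + l, by omega⟩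
  · obtain ⟨k, hk⟩ := hu; obtain ⟨l, hl⟩ := hv; exact ⟨k + l, by omega⟩
  · exfalso
    obtain ⟨k, hk⟩ := hu; obtain ⟨l, hl⟩ := hv; obtain ⟨m, hm⟩ := h
    have : u ^ 2 + 3 * v ^ 2 = 2*(2*k^2+2*k+6*l^2+6*l+2) := by rw [hk, hl]; ring
    omega

/-- The descent theorem: `x³ + y³ = 2z³` with `x, y` coprime implies `x = ±y`. -/
theorem t2z3_aux : ∀ n : ℕ, ∀ x y z : ℤ, z.natAbs = n → IsCoprime x y →
    x ^ 3 + y ^ 3 = 2 * z ^ 3 → x = y ∨ x = -y := by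
  intro n
  induction n using Nat.strong_induction_on with
  | _ n IH =>
  intro x y z hn hco heq
  by_cases hz : z = 0
  · right
    subst hz
    have h3 : x ^ 3 = (-y) ^ 3 := by linear_combination heq
    exact int_cube_inj h3
  by_cases hxy : x = y
  · exact Or.inl hxy
  by_cases hxy' : x = -y
  · exact Or.inr hxy'
  exfalso
  -- x and y are both odd
  have hodd : Odd x ∧ Odd y := by
    rcases Int.even_or_odd x with hX | hX <;> rcases Int.even_or_odd y with hY | hY
    · exfalso
      obtain ⟨k, hk⟩ := hX; obtain ⟨l, hl⟩ := hY
      obtain ⟨A, B, hAB⟩ := hco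
      have h2 : (2:ℤ) ∣ 1 := ⟨A * k + B * l, by rw [hk, hl] at hAB; linear_combination -hAB⟩
      norm_num at h2
    · exfalso
      have hodd3 : Odd (x ^ 3 + y ^ 3) :=
        (Int.even_pow.mpr ⟨hX, by norm_num⟩).add_odd (hY.pow)
      rw [heq] at hodd3
      exact (Int.not_odd_iff_even.mpr ⟨z ^ 3, by ring⟩) hodd3
    · exfalso
      have hodd3 : Odd (x ^ 3 + y ^ 3) := (hX.pow).add_even (Int.even_pow.mpr ⟨hY, by norm_num⟩)
      rw [heq] at hodd3
      exact (Int.not_odd_iff_even.mpr ⟨z ^ 3, by ring⟩) hodd3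
    · exact ⟨hX, hY⟩
  obtain ⟨hXodd, hYodd⟩ := hodd
  -- p, q
  obtain ⟨k, hk⟩ := hXodd
  obtain ⟨l, hl⟩ := hYodd
  obtain ⟨p, q, hx, hy⟩ : ∃ p q : ℤ, x = p + q ∧ y = p - q :=
    ⟨k + l + 1, k - l, by omega, by omega⟩
  have hcopq : IsCoprime p q := by
    obtain ⟨A, B, hAB⟩ := hco
    exact ⟨A + B, A - B, by rw [hx, hy] at hAB; linear_combination hAB⟩
  have hq0 : q ≠ 0 := fun h => hxy (by rw [hx, hy, h]; ring)
  have hp0 : p ≠ 0 := fun h => hxy' (by rw [hx, hy, h]; ring)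
  have hpq : p * (p ^ 2 + 3 * q ^ 2) = z ^ 3 := by
    have h2 : 2 * (p * (p ^ 2 + 3 * q ^ 2)) = 2 * z ^ 3 := by
      rw [hx, hy] at heq; linear_combination heq
    exact mul_left_cancel₀ two_ne_zero h2
  have hpq_odd : Odd (p + q) := hx ▸ ⟨k, hk⟩
  -- parity of p², q² form
  have hform_odd : Odd (p ^ 2 + 3 * q ^ 2) := odd_sq_form hpq_odd
  by_cases h3p : (3:ℤ) ∣ p
  · -- case 3 ∣ p
    obtain ⟨r, hr⟩ := h3p
    have h3q : ¬ (3:ℤ) ∣ q := by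
      rintro ⟨t, ht⟩
      obtain ⟨A, B, hAB⟩ := hcopq
      have h31 : (3:ℤ) ∣ 1 := ⟨A * r + B * t, by rw [hr, ht] at hAB; linear_combination -hAB⟩
      norm_num at h31
    have h3z : (3:ℤ) ∣ z := by
      have h3z3 : (3:ℤ) ∣ z ^ 3 := ⟨r * (p^2 + 3*q^2), by rw [← hpq, hr]; ring⟩
      exact Int.Prime.dvd_pow' (by norm_num) h3z3
    obtain ⟨m, hm⟩ := h3z
    have hm3 : 3 * m ^ 3 = r * (3 * r ^ 2 + q ^ 2) := by
      have h27 : 27 * m ^ 3 = 9 * (r * (3 * r ^ 2 + q ^ 2)) := by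
        rw [hm] at hpq; rw [hr] at hpq; linear_combination -hpq
      linarith
    have h3r : (3:ℤ) ∣ r := by
      have hh : (3:ℤ) ∣ r * (3 * r ^ 2 + q ^ 2) := ⟨m ^ 3, hm3.symm⟩
      have h3f : ¬ (3:ℤ) ∣ (3 * r ^ 2 + q ^ 2) := by
        rintro ⟨t, ht⟩
        have hq2 : (3:ℤ) ∣ q ^ 2 := ⟨t - r ^ 2, by linarith⟩
        exact h3q (Int.Prime.dvd_pow' (by norm_num) hq2)
      rcases (Int.Prime.dvd_mul' (by norm_num) hh) with hc | hc
      · exact hc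
      · exact absurd hc h3f
    obtain ⟨w, hw⟩ := h3r
    have hmw : m ^ 3 = w * (q ^ 2 + 27 * w ^ 2) := by
      rw [hw] at hm3
      have : 3 * m ^ 3 = 3 * (w * (q ^ 2 + 27 * w ^ 2)) := by linear_combination hm3
      linarith
    have hm0 : m ≠ 0 := fun h => hz (by rw [hm, h]; ring)
    have hw0 : w ≠ 0 := fun h => hm0 (by
      have : m ^ 3 = 0 := by rw [hmw, h]; ring
      exact pow_eq_zero_iff (by norm_num) |>.mp this)
    have hcopw : IsCoprime w q := by
      have hwp : w ∣ p := ⟨9, by rw [hr, hw]; ring⟩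
      exact IsCoprime.of_isCoprime_of_dvd_left hcopq hwp
    have hco_w : IsCoprime w (q ^ 2 + 27 * w ^ 2) := by
      have h1 : IsCoprime w (q ^ 2) := hcopw.pow_right
      have h2 := h1.add_mul_left_right (27 * w)
      have h3 : q ^ 2 + w * (27 * w) = q ^ 2 + 27 * w ^ 2 := by ring
      rwa [h3] at h2
    obtain ⟨W, hW⟩ := int_cube_split hco_w hmw.symm
    have hmw' : (q ^ 2 + 27 * w ^ 2) * w = m ^ 3 := by linear_combination -hmw
    obtain ⟨S, hS⟩ := int_cube_split hco_w.symm hmw'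
    -- Euler's lemma on q² + 3(3w)² = S³
    have heul : q ^ 2 + 3 * (3*w) ^ 2 = S ^ 3 := by rw [← hS]; ring
    have hco_q3w : IsCoprime q (3 * w) := by
      have h1 : IsCoprime q 3 := isCoprime_of_not_three_dvd h3q
      exact h1.mul_right hcopw.symm
    obtain ⟨u, v, hqu, hwu, hSu⟩ := euler_cube hco_q3w heul
    have hwv : w = v * ((u - v) * (u + v)) := by
      have h3w : 3 * w = 3 * (v * ((u - v) * (u + v))) := by rw [hwu]; ring
      linarith
    -- S is odd, so u + v is odd
    have hq3w_odd : Odd (q + 3 * w) := by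
      have h9 : Odd (p + q) := hpq_odd
      rw [hr, hw] at h9
      obtain ⟨t, ht⟩ := h9
      exact ⟨t - 3 * w, by omega⟩
    have hS_odd : Odd S := odd_of_cube_odd (heul ▸ odd_sq_form hq3w_odd)
    have huv_odd : Odd (u + v) := odd_add_of_odd_form (hSu ▸ hS_odd)
    -- coprimality of u, v
    have hcouv : IsCoprime u v := by
      obtain ⟨A, B, hAB⟩ := hco_q3w
      refine ⟨A * (u^2 - 9*v^2), B * (3*u^2 - 3*v^2), ?_⟩
      rw [hqu, hwu] at hAB
      linear_combination hAB
    have hcov_uv1 : IsCoprime v (u - v) := by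
      have := hcouv.symm.add_mul_left_right (-1)
      have h3 : u + v * (-1) = u - v := by ring
      rwa [h3] at this
    have hcov_uv2 : IsCoprime v (u + v) := by
      have := hcouv.symm.add_mul_left_right 1
      have h3 : u + v * 1 = u + v := by ring
      rwa [h3] at this
    have hco_fg : IsCoprime (u - v) (u + v) := by
      rw [Int.isCoprime_iff_gcd_eq_one]
      by_contra hne
      set g : ℕ := Int.gcd (u - v) (u + v) with hg
      have hg1 : (g:ℤ) ∣ (u - v) := Int.gcd_dvd_left _ _
      have hg2 : (g:ℤ) ∣ (u + v) := Int.gcd_dvd_right _ _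
      have hgodd : Odd (g:ℤ) := by
        rcases Int.even_or_odd (g:ℤ) with he | ho
        · exfalso
          obtain ⟨c, hc⟩ := hg2
          obtain ⟨t, ht⟩ := he
          have heven : Even (u + v) := ⟨t * c, by rw [hc, ht]; ring⟩
          exact (Int.not_odd_iff_even.mpr heven) huv_odd
        · exact ho
      have hco2g : IsCoprime ((g:ℤ)) 2 := isCoprime_of_odd hgodd
      have hgu : (g:ℤ) ∣ u := by
        have : (g:ℤ) ∣ 2 * u := by
          have := dvd_add hg1 hg2
          have h3 : (u - v) + (u + v) = 2 * u := by ring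
          rwa [h3] at this
        exact hco2g.dvd_of_dvd_mul_left this
      have hgv : (g:ℤ) ∣ v := by
        have : (g:ℤ) ∣ 2 * v := by
          have := dvd_sub hg2 hg1
          have h3 : (u + v) - (u - v) = 2 * v := by ring
          rwa [h3] at this
        exact hco2g.dvd_of_dvd_mul_left this
      obtain ⟨A, B, hAB⟩ := hcouv
      have : (g:ℤ) ∣ 1 := by
        rw [← hAB]
        exact dvd_add (hgu.mul_left A) (hgv.mul_left B)
      have := Int.eq_one_of_dvd_one (by positivity) this
      exact hne (by exact_mod_cast this)
    -- split w = W³ into cubes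
    have hfact : v * ((u - v) * (u + v)) = W ^ 3 := by rw [← hwv, hW]
    have hco_v_rest : IsCoprime v ((u - v) * (u + v)) := hcov_uv1.mul_right hcov_uv2
    obtain ⟨e, he⟩ := int_cube_split hco_v_rest hfact
    obtain ⟨E, hE⟩ := int_cube_split hco_v_rest.symm (by rw [mul_comm] at hfact; exact hfact)
    obtain ⟨f, hf⟩ := int_cube_split hco_fg hE
    obtain ⟨G, hG⟩ := int_cube_split hco_fg.symm (by rw [mul_comm] at hE; exact hE)
    -- new solution: G³ + (-f)³ = 2e³
    have hnew : G ^ 3 + (-f) ^ 3 = 2 * e ^ 3 := by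
      rw [← hG]
      have : (-f)^3 = -(f^3) := by ring
      rw [this, ← hf, ← he]
      ring
    have hconew : IsCoprime G (-f) := by
      have h1 : IsCoprime (G ^ 3) ((-f) ^ 3) := by
        rw [← hG]
        have h2 : (-f)^3 = -(f^3) := by ring
        rw [h2, ← hf]
        exact hco_fg.symm.neg_right
      exact ((IsCoprime.pow_left_iff (by norm_num)).mp
        ((IsCoprime.pow_right_iff (by norm_num)).mp h1))
    -- sizes
    have he0 : e ≠ 0 := by
      rintro rfl
      norm_num at he
      exact hw0 (by rw [hwv, he]; ring)
    have hS2 : 2 ≤ S.natAbs := by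
      have h27 : 27 * w ^ 2 ≥ 27 := by nlinarith [one_le_sq hw0]
      have hq2 : q ^ 2 ≥ 0 := sq_nonneg q
      have hS3 : S ^ 3 ≥ 27 := by rw [← hS]; linarith
      have h2S : 2 ≤ S := by
        by_contra hcon
        push_neg at hcon
        have h1 : S ≤ 1 := by omega
        have h2 := (Odd.strictMono_pow (R := ℤ) (n := 3) ⟨1, by norm_num⟩).monotone h1
        norm_num at h2
        linarith
      omega
    -- m³ = w * S³, |v| ≤ |w|, |e|³ = |v|
    have hsz1 : m.natAbs ^ 3 = w.natAbs * S.natAbs ^ 3 := by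
      have : m ^ 3 = w * S ^ 3 := by rw [hmw, hS]
      calc m.natAbs ^ 3 = (m ^ 3).natAbs := by rw [Int.natAbs_pow]
        _ = (w * S ^ 3).natAbs := by rw [this]
        _ = w.natAbs * S.natAbs ^ 3 := by rw [Int.natAbs_mul, Int.natAbs_pow]
    have hsz2 : e.natAbs ^ 3 ≤ w.natAbs := by
      have hvw : v.natAbs ≤ w.natAbs := by
        have : w.natAbs = v.natAbs * ((u-v)*(u+v)).natAbs := by
          rw [← Int.natAbs_mul, ← hwv]
        have h1 : 1 ≤ ((u-v)*(u+v)).natAbs := by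
          rcases Nat.eq_zero_or_pos ((u-v)*(u+v)).natAbs with h | h
          · exfalso
            have : (u-v)*(u+v) = 0 := by
              have := Int.natAbs_eq_zero.mp h; exact this
            exact hw0 (by rw [hwv, this]; ring)
          · omega
        calc v.natAbs = v.natAbs * 1 := by ring
          _ ≤ v.natAbs * ((u-v)*(u+v)).natAbs := Nat.mul_le_mul_left _ h1
          _ = w.natAbs := this.symm
      have : e.natAbs ^ 3 = v.natAbs := by
        rw [← Int.natAbs_pow, ← he]
      omega
    have hem : e.natAbs < m.natAbs := by
      by_contra hle
      push_neg at hle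
      have h1 : m.natAbs ^ 3 ≤ e.natAbs ^ 3 := Nat.pow_le_pow_left hle 3
      have h2 : 8 * e.natAbs ^ 3 ≤ m.natAbs ^ 3 := by
        calc 8 * e.natAbs ^ 3 ≤ 8 * w.natAbs := by omega
          _ ≤ S.natAbs ^ 3 * w.natAbs := by
              have : 8 ≤ S.natAbs ^ 3 := by
                calc (8:ℕ) = 2^3 := by norm_num
                  _ ≤ S.natAbs ^ 3 := Nat.pow_le_pow_left hS2 3
              exact Nat.mul_le_mul_right _ this
          _ = m.natAbs ^ 3 := by rw [mul_comm]; omega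
      have he1 : 1 ≤ e.natAbs ^ 3 :=
        Nat.one_le_iff_ne_zero.mpr (pow_ne_zero _ (Int.natAbs_ne_zero.mpr he0))
      omega
    have hmz : m.natAbs ≤ z.natAbs := by
      rw [hm, Int.natAbs_mul]
      simp
      omega
    -- apply induction hypothesis
    have := IH e.natAbs (by omega) G (-f) e rfl hconew hnew
    rcases this with hGf | hGf
    · -- G = -f : u + v = -(u - v) → u = 0 → q = 0
      have h1 : u + v = -(u - v) := by
        rw [hG, hf, hGf]; ring
      have hu0 : u = 0 := by linarith
      exact hq0 (by rw [hqu, hu0]; ring)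
    · -- G = -(-f) = f : u + v = u - v → v = 0 → w = 0
      have h1 : u + v = u - v := by
        rw [hG, hf, hGf]; ring
      have hv0 : v = 0 := by linarith
      exact hw0 (by rw [hwv, hv0]; ring)
  · -- case 3 ∤ p
    have hco_p_form : IsCoprime p (p ^ 2 + 3 * q ^ 2) := by
      have h1 : IsCoprime p 3 := isCoprime_of_not_three_dvd h3p
      have h2 : IsCoprime p (q ^ 2) := hcopq.pow_right
      have h3 : IsCoprime p (3 * q ^ 2) := h1.mul_right h2
      have h4 := h3.add_mul_left_right p
      have h5 : 3 * q ^ 2 + p * p = p ^ 2 + 3 * q ^ 2 := by ring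
      rwa [h5] at h4
    obtain ⟨P, hP⟩ := int_cube_split hco_p_form hpq
    obtain ⟨S, hS⟩ := int_cube_split hco_p_form.symm (by rw [mul_comm] at hpq; exact hpq)
    obtain ⟨u, v, hpu, hqu, hSu⟩ := euler_cube hcopq hS
    have hS_odd : Odd S := odd_of_cube_odd (hS ▸ hform_odd)
    have huv_odd : Odd (u + v) := odd_add_of_odd_form (hSu ▸ hS_odd)
    have h3u : ¬ (3:ℤ) ∣ u := by
      rintro ⟨t, ht⟩
      exact h3p ⟨9 * t ^ 3 - 9 * t * v ^ 2, by rw [hpu, ht]; ring⟩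
    have hcouv : IsCoprime u v := by
      obtain ⟨A, B, hAB⟩ := hcopq
      refine ⟨A * (u ^ 2 - 9 * v ^ 2), B * (3 * u ^ 2 - 3 * v ^ 2), ?_⟩
      rw [hpu, hqu] at hAB
      linear_combination hAB
    have hco_u3v : IsCoprime u (3 * v) :=
      (isCoprime_of_not_three_dvd h3u).mul_right hcouv
    have hco1 : IsCoprime u (u - 3 * v) := by
      have := hco_u3v.neg_right.add_mul_left_right 1
      have h3 : -(3 * v) + u * 1 = u - 3 * v := by ring
      rwa [h3] at this
    have hco2 : IsCoprime u (u + 3 * v) := by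
      have := hco_u3v.add_mul_left_right 1
      have h3 : 3 * v + u * 1 = u + 3 * v := by ring
      rwa [h3] at this
    have hco_fg : IsCoprime (u - 3 * v) (u + 3 * v) := by
      rw [Int.isCoprime_iff_gcd_eq_one]
      by_contra hne
      set g : ℕ := Int.gcd (u - 3 * v) (u + 3 * v) with hg
      have hg1 : (g:ℤ) ∣ (u - 3 * v) := Int.gcd_dvd_left _ _
      have hg2 : (g:ℤ) ∣ (u + 3 * v) := Int.gcd_dvd_right _ _
      have hu3v_odd : Odd (u + 3 * v) := by
        obtain ⟨t, ht⟩ := huv_odd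
        exact ⟨t + v, by omega⟩
      have hgodd : Odd (g:ℤ) := by
        rcases Int.even_or_odd (g:ℤ) with he | ho
        · exfalso
          obtain ⟨c, hc⟩ := hg2
          obtain ⟨t, ht⟩ := he
          have heven : Even (u + 3 * v) := ⟨t * c, by rw [hc, ht]; ring⟩
          exact (Int.not_odd_iff_even.mpr heven) hu3v_odd
        · exact ho
      have hco2g : IsCoprime ((g:ℤ)) 2 := isCoprime_of_odd hgodd
      have hgu : (g:ℤ) ∣ u := by
        have : (g:ℤ) ∣ 2 * u := by
          have := dvd_add hg1 hg2
          have h3 : (u - 3 * v) + (u + 3 * v) = 2 * u := by ring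
          rwa [h3] at this
        exact hco2g.dvd_of_dvd_mul_left this
      have hg3 : ¬ (3:ℤ) ∣ (g:ℤ) := by
        rintro hdvd
        exact h3u (dvd_trans hdvd hgu)
      have hg3v : (g:ℤ) ∣ 3 * v := by
        have : (g:ℤ) ∣ 2 * (3 * v) := by
          have := dvd_sub hg2 hg1
          have h3 : (u + 3 * v) - (u - 3 * v) = 2 * (3 * v) := by ring
          rwa [h3] at this
        exact hco2g.dvd_of_dvd_mul_left this
      obtain ⟨A, B, hAB⟩ := hco_u3v
      have : (g:ℤ) ∣ 1 := by
        rw [← hAB]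
        exact dvd_add (hgu.mul_left A) (hg3v.mul_left B)
      have := Int.eq_one_of_dvd_one (by positivity) this
      exact hne (by exact_mod_cast this)
    have hfact : u * ((u - 3 * v) * (u + 3 * v)) = P ^ 3 := by
      rw [← hP, hpu]; ring
    have hco_u_rest : IsCoprime u ((u - 3 * v) * (u + 3 * v)) := hco1.mul_right hco2
    obtain ⟨e, he⟩ := int_cube_split hco_u_rest hfact
    obtain ⟨E, hE⟩ := int_cube_split hco_u_rest.symm (by rw [mul_comm] at hfact; exact hfact)
    obtain ⟨f, hf⟩ := int_cube_split hco_fg hE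
    obtain ⟨G, hG⟩ := int_cube_split hco_fg.symm (by rw [mul_comm] at hE; exact hE)
    have hnew : f ^ 3 + G ^ 3 = 2 * e ^ 3 := by
      rw [← hG, ← hf, ← he]
      ring
    have hconew : IsCoprime f G := by
      have h1 : IsCoprime (f ^ 3) (G ^ 3) := by
        rw [← hG, ← hf]
        exact hco_fg
      exact ((IsCoprime.pow_left_iff (by norm_num)).mp
        ((IsCoprime.pow_right_iff (by norm_num)).mp h1))
    have hu0 : u ≠ 0 := fun h => hp0 (by rw [hpu, h]; ring)
    have he0 : e ≠ 0 := by
      rintro rfl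
      exact hu0 (by rw [he]; ring)
    have hS2 : 2 ≤ S.natAbs := by
      have hq1 : 1 ≤ q ^ 2 := one_le_sq hq0
      have hp1 : 1 ≤ p ^ 2 := one_le_sq hp0
      have hS3 : S ^ 3 ≥ 4 := by rw [← hS]; linarith
      have h2S : 2 ≤ S := by
        by_contra hcon
        push_neg at hcon
        have h1 : S ≤ 1 := by omega
        have h2 := (Odd.strictMono_pow (R := ℤ) (n := 3) ⟨1, by norm_num⟩).monotone h1
        norm_num at h2
        linarith
      omega
    have hsz1 : z.natAbs ^ 3 = p.natAbs * S.natAbs ^ 3 := by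
      have hzz : z ^ 3 = p * S ^ 3 := by rw [← hpq, hS]
      calc z.natAbs ^ 3 = (z ^ 3).natAbs := by rw [Int.natAbs_pow]
        _ = (p * S ^ 3).natAbs := by rw [hzz]
        _ = p.natAbs * S.natAbs ^ 3 := by rw [Int.natAbs_mul, Int.natAbs_pow]
    have hsz2 : e.natAbs ^ 3 ≤ p.natAbs := by
      have hup : u.natAbs ≤ p.natAbs := by
        have hpnat : p.natAbs = u.natAbs * ((u - 3*v) * (u + 3*v)).natAbs := by
          rw [← Int.natAbs_mul]
          congr 1
          rw [hpu]; ring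
        have h1 : 1 ≤ ((u - 3*v) * (u + 3*v)).natAbs := by
          rcases Nat.eq_zero_or_pos ((u - 3*v) * (u + 3*v)).natAbs with h | h
          · exfalso
            have h0 : (u - 3*v) * (u + 3*v) = 0 := Int.natAbs_eq_zero.mp h
            refine hp0 ?_
            rw [hpu]
            have hfac : u^3 - 9*u*v^2 = u * ((u - 3*v) * (u + 3*v)) := by ring
            rw [hfac, h0, mul_zero]
          · omega
        calc u.natAbs = u.natAbs * 1 := by ring
          _ ≤ u.natAbs * ((u - 3*v) * (u + 3*v)).natAbs := Nat.mul_le_mul_left _ h1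
          _ = p.natAbs := hpnat.symm
      have : e.natAbs ^ 3 = u.natAbs := by rw [← Int.natAbs_pow, ← he]
      omega
    have hez : e.natAbs < z.natAbs := by
      by_contra hle
      push_neg at hle
      have h1 : z.natAbs ^ 3 ≤ e.natAbs ^ 3 := Nat.pow_le_pow_left hle 3
      have h2 : 8 * e.natAbs ^ 3 ≤ z.natAbs ^ 3 := by
        calc 8 * e.natAbs ^ 3 ≤ 8 * p.natAbs := by omega
          _ ≤ S.natAbs ^ 3 * p.natAbs := by
              have : 8 ≤ S.natAbs ^ 3 := by
                calc (8:ℕ) = 2 ^ 3 := by norm_num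
                  _ ≤ S.natAbs ^ 3 := Nat.pow_le_pow_left hS2 3
              exact Nat.mul_le_mul_right _ this
          _ = z.natAbs ^ 3 := by rw [mul_comm]; omega
      have he1 : 1 ≤ e.natAbs ^ 3 :=
        Nat.one_le_iff_ne_zero.mpr (pow_ne_zero _ (Int.natAbs_ne_zero.mpr he0))
      omega
    have := IH e.natAbs (by omega) f G e rfl hconew hnew
    rcases this with hfG | hfG
    · -- f = G : u - 3v = u + 3v → v = 0 → q = 0
      have h1 : u - 3 * v = u + 3 * v := by rw [hf, hG, hfG]
      have hv0 : v = 0 := by linarith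
      exact hq0 (by rw [hqu, hv0]; ring)
    · -- f = -G : u - 3v = -(u + 3v) → u = 0
      have h1 : u - 3 * v = -(u + 3 * v) := by rw [hf, hG, hfG]; ring
      have hu0' : u = 0 := by linarith
      exact hu0 hu0'

theorem t2z3 (x y z : ℤ) (hco : IsCoprime x y) (h : x ^ 3 + y ^ 3 = 2 * z ^ 3) :
    x = y ∨ x = -y :=
  t2z3_aux z.natAbs x y z rfl hco h

theorem int_cube_mono : Monotone (fun a : ℤ => a ^ 3) :=
  (Odd.strictMono_pow (R := ℤ) (n := 3) ⟨1, by norm_num⟩).monotone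

theorem euler_mordell_one (x y : ℤ) (hx : 0 < x) (hy : 0 < y)
    (h : y ^ 2 = x ^ 3 + 1) : x = 2 ∧ y = 3 := by
  rcases Int.even_or_odd y with hye | hyo
  · -- y even: impossible
    exfalso
    obtain ⟨t, ht⟩ := hye
    have hco : IsCoprime (y - 1) (y + 1) :=
      ⟨t, 1 - t, by rw [ht]; ring⟩
    have hfac : (y - 1) * (y + 1) = x ^ 3 := by linear_combination h
    obtain ⟨g, hg⟩ := int_cube_split hco hfac
    obtain ⟨H, hH⟩ := int_cube_split hco.symm (by rw [mul_comm] at hfac; exact hfac)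
    -- y ≥ 2, so g³ ≥ 1 and H³ = g³ + 2
    have hy2 : 2 ≤ y := by omega
    have hg1 : 1 ≤ g := by
      by_contra hcon
      push_neg at hcon
      have h1 : g ≤ 0 := by omega
      have h2 := int_cube_mono h1
      norm_num at h2
      omega
    have hgH : g < H := by
      by_contra hcon
      push_neg at hcon
      have h2 := int_cube_mono hcon
      simp only at h2
      rw [← hg, ← hH] at h2
      omega
    have h3 : (g + 1) ^ 3 ≤ H ^ 3 := int_cube_mono (by omega)
    rw [← hH] at h3
    have hg3 : g ^ 3 = y - 1 := hg.symm
    nlinarith [sq_nonneg g]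
  · -- y odd
    obtain ⟨t, ht⟩ := hyo
    have ht1 : 1 ≤ t := by
      rcases Nat.lt_or_ge 0 t.toNat with _ | _
      · omega
      · -- t ≤ 0: then y = 2t+1 ≤ 1, y > 0 → y = 1 → x = 0, contradiction
        by_contra hcon
        push_neg at hcon
        have ht0 : t = 0 := by omega
        have hx3 : x ^ 3 = 0 := by rw [ht, ht0] at h; linarith
        have : x = 0 := pow_eq_zero_iff (by norm_num) |>.mp hx3
        omega
    -- x is even
    have hx3e : Even (x ^ 3) := by
      refine ⟨2 * t ^ 2 + 2 * t, ?_⟩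
      rw [ht] at h
      linarith
    have hxe : Even x := (Int.even_pow.mp hx3e).1
    obtain ⟨w, hw⟩ := hxe
    have hw1 : t * (t + 1) = 2 * w ^ 3 := by
      rw [ht, hw] at h
      linarith [h]
    have hco_t : IsCoprime t (t + 1) := ⟨-1, 1, by ring⟩
    rcases Int.even_or_odd t with hte | hto
    · -- t even: t = 2n, n(t+1) = w³, t+1 = d³, n = c³, d³ - 2c³ = 1: impossible
      exfalso
      obtain ⟨n, hn⟩ := hte
      have hw2 : n * (t + 1) = w ^ 3 := by
        have : 2 * (n * (t + 1)) = 2 * w ^ 3 := by rw [← hw1, hn]; ring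
        linarith
      have hco_n : IsCoprime n (t + 1) :=
        IsCoprime.of_isCoprime_of_dvd_left hco_t ⟨2, by omega⟩
      obtain ⟨c, hc⟩ := int_cube_split hco_n hw2
      obtain ⟨d, hd⟩ := int_cube_split hco_n.symm (by rw [mul_comm] at hw2; exact hw2)
      have hnew : d ^ 3 + (-1) ^ 3 = 2 * c ^ 3 := by
        rw [← hd, ← hc]
        omega
      have hcod : IsCoprime d (-1 : ℤ) := ⟨0, -1, by ring⟩
      rcases t2z3 d (-1) c hcod hnew with h1 | h1
      · -- d = -1: t + 1 = -1
        rw [h1] at hd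
        omega
      · -- d = 1: t + 1 = 1
        norm_num at h1
        rw [h1] at hd
        norm_num at hd
        omega
    · -- t odd: t = d³, (t+1)/2 = c³, d³ + 1 = 2c³ → d = 1 → t = 1, y = 3, x = 2
      obtain ⟨s, hs⟩ := hto
      have hn : t + 1 = 2 * (s + 1) := by omega
      set n := s + 1 with hndef
      have hw2 : t * n = w ^ 3 := by
        have : 2 * (t * n) = 2 * w ^ 3 := by rw [← hw1, hn]; ring
        linarith
      have hco_n : IsCoprime t n :=
        IsCoprime.of_isCoprime_of_dvd_right hco_t ⟨2, by omega⟩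
      obtain ⟨d, hd⟩ := int_cube_split hco_n hw2
      obtain ⟨c, hc⟩ := int_cube_split hco_n.symm (by rw [mul_comm] at hw2; exact hw2)
      have hnew : d ^ 3 + 1 ^ 3 = 2 * c ^ 3 := by
        rw [← hd, ← hc]
        omega
      have hcod : IsCoprime d (1 : ℤ) := isCoprime_one_right
      rcases t2z3 d 1 c hcod hnew with h1 | h1
      · -- d = 1: t = 1
        rw [h1] at hd
        norm_num at hd
        have ht1' : t = 1 := hd
        have hyv : y = 3 := by omega
        have hnv : n = 1 := by omega
        have hwv : w = 1 := by
          have hw3 : w ^ 3 = 1 := by rw [← hw2, ht1', hnv]; ring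
          have : w ^ 3 = 1 ^ 3 := by rw [hw3]; norm_num
          exact int_cube_inj this
        exact ⟨by omega, hyv⟩
      · -- d = -1: t = -1, contradiction
        exfalso
        rw [h1] at hd
        norm_num at hd
        omega
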